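/- For a Cauchy random variable X ~ C(a,γ) with a ≠ 0, the expectation of Y = 1/(1+X²) equals (γ(a² + γ² − 1) + a² − γ² + 1) / ((a² + γ² + 1)² − 4γ²). -/

import Mathlib

open MeasureTheory Real Filter

noncomputable def cauchyPDF (a γ x : ℝ) : ℝ :=
  (1 / (π * γ)) * (γ ^ 2 / ((x - a) ^ 2 + γ ^ 2))

lemma integrable_shifted (a γ : ℝ) (hγ : 0 < γ) :
    Integrable fun x : ℝ => ((x - a) ^ 2 + γ ^ 2)⁻¹ := by
  have h2 : ∀ x : ℝ, (x ^ 2 + γ ^ 2)⁻¹ = (γ ^ 2)⁻¹ * (1 + (x / γ) ^ 2)⁻¹ := by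
    intro x; rw [div_pow, ← mul_inv]; congr 1; field_simp; ring
  have : Integrable fun x : ℝ => (x ^ 2 + γ ^ 2)⁻¹ := by
    simp_rw [h2]
    exact ((integrable_inv_one_add_sq.comp_div hγ.ne').const_mul _)
  exact this.comp_sub_right a

lemma integral_shifted (a γ : ℝ) (hγ : 0 < γ) :
    ∫ x : ℝ, ((x - a) ^ 2 + γ ^ 2)⁻¹ = π / γ := by
  have h1 : (∫ x : ℝ, ((x - a) ^ 2 + γ ^ 2)⁻¹) = ∫ x : ℝ, (x ^ 2 + γ ^ 2)⁻¹ :=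
    integral_sub_right_eq_self (fun x : ℝ => (x ^ 2 + γ ^ 2)⁻¹) a
  have h2 : ∀ x : ℝ, (x ^ 2 + γ ^ 2)⁻¹ = (γ ^ 2)⁻¹ * (1 + (x / γ) ^ 2)⁻¹ := by
    intro x; rw [div_pow, ← mul_inv]; congr 1; field_simp; ring
  rw [h1]
  simp_rw [h2]
  rw [integral_const_mul, Measure.integral_comp_div (fun y : ℝ => (1 + y ^ 2)⁻¹) γ,
    integral_univ_inv_one_add_sq, abs_of_pos hγ, smul_eq_mul]
  field_simp

lemma tendsto_ratio (a γ : ℝ) (hγ : 0 < γ) (l : Filter ℝ)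
    (hl : Tendsto (fun x : ℝ => x⁻¹) l (nhds 0)) (hl' : ∀ᶠ x : ℝ in l, x ≠ 0) :
    Tendsto (fun x : ℝ => Real.log ((1 + x ^ 2) / ((x - a) ^ 2 + γ ^ 2))) l (nhds 0) := by
  have hr : Tendsto (fun x : ℝ => (1 + x ^ 2) / ((x - a) ^ 2 + γ ^ 2)) l (nhds 1) := by
    have hφ : ContinuousAt (fun t : ℝ => (t ^ 2 + 1) / ((1 - a * t) ^ 2 + γ ^ 2 * t ^ 2)) 0 := by
      apply ContinuousAt.div (by fun_prop) (by fun_prop)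
      norm_num
    have this1 := (hφ.tendsto.comp hl)
    norm_num at this1
    refine this1.congr' ?_
    filter_upwards [hl'] with x hx
    have h1 : (0:ℝ) < (x - a) ^ 2 + γ ^ 2 := by positivity
    have h2 : (0:ℝ) < (1 - a * x⁻¹) ^ 2 + γ ^ 2 * (x⁻¹) ^ 2 := by
      have he : (1 - a * x⁻¹) ^ 2 + γ ^ 2 * (x⁻¹) ^ 2 = ((x - a) ^ 2 + γ ^ 2) / x ^ 2 := by
        field_simp
      rw [he]; positivity
    show (x⁻¹ ^ 2 + 1) / ((1 - a * x⁻¹) ^ 2 + γ ^ 2 * x⁻¹ ^ 2) = _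
    rw [div_eq_div_iff h2.ne' h1.ne']
    field_simp
  have := (Real.continuousAt_log one_ne_zero).tendsto.comp hr
  rwa [Real.log_one] at this

lemma hasDerivAt_H (a γ : ℝ) (hγ : 0 < γ) (x : ℝ) :
    HasDerivAt (fun x : ℝ => (1 / 2) * (Real.log (1 + x ^ 2) - Real.log ((x - a) ^ 2 + γ ^ 2)))
      (x / (1 + x ^ 2) - (x - a) / ((x - a) ^ 2 + γ ^ 2)) x := by
  have hpos1 : (0:ℝ) < 1 + x ^ 2 := by positivity
  have hpos2 : (0:ℝ) < (x - a) ^ 2 + γ ^ 2 := by positivity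
  have d1 : HasDerivAt (fun x : ℝ => Real.log (1 + x ^ 2)) (2 * x / (1 + x ^ 2)) x := by
    have h : HasDerivAt (fun x : ℝ => 1 + x ^ 2) (2 * x) x := by
      simpa using ((hasDerivAt_pow 2 x).const_add 1)
    simpa using h.log hpos1.ne'
  have d2 : HasDerivAt (fun x : ℝ => Real.log ((x - a) ^ 2 + γ ^ 2))
      (2 * (x - a) / ((x - a) ^ 2 + γ ^ 2)) x := by
    have h0 : HasDerivAt (fun x : ℝ => (x - a) ^ 2 + γ ^ 2) (2 * (x - a)) x := by
      have := (((hasDerivAt_id x).sub_const a).pow 2).add_const (γ ^ 2)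
      simpa using this
    simpa using h0.log hpos2.ne'
  have h := (d1.sub d2).const_mul (1 / 2 : ℝ)
  refine h.congr_deriv ?_
  ring

lemma tendsto_H_atTop (a γ : ℝ) (hγ : 0 < γ) :
    Tendsto (fun x : ℝ => (1 / 2) * (Real.log (1 + x ^ 2) - Real.log ((x - a) ^ 2 + γ ^ 2)))
      atTop (nhds 0) := by
  have h := tendsto_ratio a γ hγ atTop tendsto_inv_atTop_zero
    (eventually_atTop.2 ⟨1, fun x hx => by linarith⟩)
  have h2 := h.const_mul (1 / 2 : ℝ)
  rw [mul_zero] at h2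
  refine h2.congr fun x => ?_
  rw [Real.log_div (by positivity) (by positivity)]

lemma tendsto_H_atBot (a γ : ℝ) (hγ : 0 < γ) :
    Tendsto (fun x : ℝ => (1 / 2) * (Real.log (1 + x ^ 2) - Real.log ((x - a) ^ 2 + γ ^ 2)))
      atBot (nhds 0) := by
  have hinv : Tendsto (fun x : ℝ => x⁻¹) atBot (nhds 0) := by
    have h1 : Tendsto (fun x : ℝ => (-x)⁻¹) atBot (nhds 0) :=
      (tendsto_inv_atTop_zero : Tendsto (fun x : ℝ => x⁻¹) atTop (nhds 0)).comp
        tendsto_neg_atBot_atTop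
    have h2 : Tendsto (fun x : ℝ => -(-x)⁻¹) atBot (nhds (-0)) := h1.neg
    rw [neg_zero] at h2
    exact h2.congr fun x => by rw [← inv_neg, neg_neg]
  have h := tendsto_ratio a γ hγ atBot hinv (eventually_atBot.2 ⟨-1, fun x hx => by linarith⟩)
  have h2 := h.const_mul (1 / 2 : ℝ)
  rw [mul_zero] at h2
  refine h2.congr fun x => ?_
  rw [Real.log_div (by positivity) (by positivity)]

lemma integral_bracket (a γ : ℝ) (hγ : 0 < γ)
    (hint : Integrable fun x : ℝ => x / (1 + x ^ 2) - (x - a) / ((x - a) ^ 2 + γ ^ 2)) :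
    ∫ x : ℝ, (x / (1 + x ^ 2) - (x - a) / ((x - a) ^ 2 + γ ^ 2)) = 0 := by
  have hIic : ∫ x in Set.Iic (0:ℝ), (x / (1 + x ^ 2) - (x - a) / ((x - a) ^ 2 + γ ^ 2)) =
      (1 / 2) * (Real.log (1 + (0:ℝ) ^ 2) - Real.log (((0:ℝ) - a) ^ 2 + γ ^ 2)) - 0 :=
    integral_Iic_of_hasDerivAt_of_tendsto' (fun x _ => hasDerivAt_H a γ hγ x)
      hint.integrableOn (tendsto_H_atBot a γ hγ)
  have hIoi : ∫ x in Set.Ioi (0:ℝ), (x / (1 + x ^ 2) - (x - a) / ((x - a) ^ 2 + γ ^ 2)) =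
      0 - (1 / 2) * (Real.log (1 + (0:ℝ) ^ 2) - Real.log (((0:ℝ) - a) ^ 2 + γ ^ 2)) :=
    integral_Ioi_of_hasDerivAt_of_tendsto' (fun x _ => hasDerivAt_H a γ hγ x)
      hint.integrableOn (tendsto_H_atTop a γ hγ)
  rw [← intervalIntegral.integral_Iic_add_Ioi hint.integrableOn hint.integrableOn, hIic, hIoi]
  ring

/-- For `X ~ C(a,γ)` with `a ≠ 0`, the expectation of `Y = 1/(1+X²)` equals
`(γ(a² + γ² − 1) + a² − γ² + 1) / ((a² + γ² + 1)² − 4γ²)`. -/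
theorem cauchy_expectation_one_div_one_add_sq (a γ : ℝ) (hγ : 0 < γ) (ha : a ≠ 0) :
    ∫ x : ℝ, (1 / (1 + x ^ 2)) * cauchyPDF a γ x =
      (γ * (a ^ 2 + γ ^ 2 - 1) + a ^ 2 - γ ^ 2 + 1) /
        ((a ^ 2 + γ ^ 2 + 1) ^ 2 - 4 * γ ^ 2) := by
  have hKpos : 0 < (a ^ 2 + γ ^ 2 - 1) ^ 2 + 4 * a ^ 2 := by positivity
  obtain ⟨K, hK, hKpos⟩ : ∃ K : ℝ, K = (a ^ 2 + γ ^ 2 - 1) ^ 2 + 4 * a ^ 2 ∧ 0 < K :=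
    ⟨_, rfl, hKpos⟩
  set A : ℝ := 2 * a / K with hA
  set B : ℝ := (a ^ 2 + γ ^ 2 - 1) / K with hB
  set C : ℝ := (2 * a ^ 2 - (a ^ 2 + γ ^ 2 - 1)) / K with hC
  have hpos1 : ∀ x : ℝ, (0:ℝ) < 1 + x ^ 2 := fun x => by positivity
  have hpos2 : ∀ x : ℝ, (0:ℝ) < (x - a) ^ 2 + γ ^ 2 := fun x => by positivity
  have hdecomp : ∀ x : ℝ, (1 / (1 + x ^ 2)) * cauchyPDF a γ x =
      (γ / π) * (B * (1 + x ^ 2)⁻¹ + C * ((x - a) ^ 2 + γ ^ 2)⁻¹ +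
        A * (x / (1 + x ^ 2) - (x - a) / ((x - a) ^ 2 + γ ^ 2))) := by
    intro x
    rw [cauchyPDF, hA, hB, hC, hK]
    have h1 := (hpos1 x).ne'
    have h2 := (hpos2 x).ne'
    have hπ := pi_ne_zero
    have hKne : (a ^ 2 + γ ^ 2 - 1) ^ 2 + 4 * a ^ 2 ≠ 0 := by positivity
    field_simp
    ring
  have i1 : Integrable fun x : ℝ => (1 + x ^ 2)⁻¹ := integrable_inv_one_add_sq
  have i2 : Integrable fun x : ℝ => ((x - a) ^ 2 + γ ^ 2)⁻¹ := integrable_shifted a γ hγ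
  have ibr : Integrable fun x : ℝ => x / (1 + x ^ 2) - (x - a) / ((x - a) ^ 2 + γ ^ 2) := by
    have iF : Integrable fun x : ℝ => ((1 + x ^ 2) * ((x - a) ^ 2 + γ ^ 2))⁻¹ := by
      refine (i1.const_mul ((γ ^ 2)⁻¹)).mono ?_ (ae_of_all _ fun x => ?_)
      · exact (Continuous.inv₀ (by fun_prop) fun x =>
          (mul_pos (hpos1 x) (hpos2 x)).ne').aestronglyMeasurable
      · rw [Real.norm_eq_abs, Real.norm_eq_abs,
          abs_of_nonneg (by positivity), abs_of_nonneg (by positivity)]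
        rw [mul_inv, mul_comm]
        apply mul_le_mul_of_nonneg_right _ (by positivity)
        exact inv_anti₀ (by positivity) (by nlinarith [sq_nonneg (x - a)])
    have key : ∀ x : ℝ, x / (1 + x ^ 2) - (x - a) / ((x - a) ^ 2 + γ ^ 2) =
        (((1 + x ^ 2) * ((x - a) ^ 2 + γ ^ 2))⁻¹ - B * (1 + x ^ 2)⁻¹
          - C * ((x - a) ^ 2 + γ ^ 2)⁻¹) / A := by
      intro x
      rw [hA, hB, hC, hK]
      have h1 := (hpos1 x).ne'
      have h2 := (hpos2 x).ne'
      have hKne : (a ^ 2 + γ ^ 2 - 1) ^ 2 + 4 * a ^ 2 ≠ 0 := by positivity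
      rw [eq_div_iff (div_ne_zero (by simpa using ha) hKne)]
      field_simp
      ring
    simp_rw [key]
    exact ((iF.sub (i1.const_mul B)).sub (i2.const_mul C)).div_const A
  calc ∫ x : ℝ, (1 / (1 + x ^ 2)) * cauchyPDF a γ x
      = ∫ x : ℝ, (γ / π) * (B * (1 + x ^ 2)⁻¹ + C * ((x - a) ^ 2 + γ ^ 2)⁻¹ +
          A * (x / (1 + x ^ 2) - (x - a) / ((x - a) ^ 2 + γ ^ 2))) := by
        exact integral_congr_ae (ae_of_all _ hdecomp)
    _ = (γ / π) * ((B * ∫ x : ℝ, (1 + x ^ 2)⁻¹) + (C * ∫ x : ℝ, ((x - a) ^ 2 + γ ^ 2)⁻¹) +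
          A * ∫ x : ℝ, (x / (1 + x ^ 2) - (x - a) / ((x - a) ^ 2 + γ ^ 2))) := by
        have j1 : Integrable (fun x : ℝ => B * (1 + x ^ 2)⁻¹ + C * ((x - a) ^ 2 + γ ^ 2)⁻¹)
            volume := (i1.const_mul B).add (i2.const_mul C)
        have j2 : Integrable (fun x : ℝ =>
            A * (x / (1 + x ^ 2) - (x - a) / ((x - a) ^ 2 + γ ^ 2))) volume := ibr.const_mul A
        have j3 : Integrable (fun x : ℝ => B * (1 + x ^ 2)⁻¹) volume := i1.const_mul B
        have j4 : Integrable (fun x : ℝ => C * ((x - a) ^ 2 + γ ^ 2)⁻¹) volume := i2.const_mul C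
        rw [integral_const_mul]
        rw [integral_add j1 j2, integral_add j3 j4,
          integral_const_mul, integral_const_mul, integral_const_mul]
    _ = (γ / π) * (B * π + C * (π / γ) + A * 0) := by
        rw [integral_univ_inv_one_add_sq, integral_shifted a γ hγ, integral_bracket a γ hγ ibr]
    _ = (γ * (a ^ 2 + γ ^ 2 - 1) + a ^ 2 - γ ^ 2 + 1) /
        ((a ^ 2 + γ ^ 2 + 1) ^ 2 - 4 * γ ^ 2) := by
        rw [hB, hC, hK]
        have hπ := pi_ne_zero
        have hd : (a ^ 2 + γ ^ 2 + 1) ^ 2 - 4 * γ ^ 2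
            = (a ^ 2 + γ ^ 2 - 1) ^ 2 + 4 * a ^ 2 := by ring
        rw [hd]
        field_simp
        ring
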